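/- Any two orthogonal pure states |ψ⟩, |φ⟩ in ℂ² ⊗ ℂ^d admit orthonormal bases {|0'⟩,|1'⟩} of ℂ² and vectors η₀, η₁, ν₀, ν₁ ∈ ℂ^d with ⟨η_i|ν_i⟩ = 0 for i = 0,1, such that |ψ⟩ = |0'⟩|η₀⟩ + |1'⟩|η₁⟩ and |φ⟩ = |0'⟩|ν₀⟩ + |1'⟩|ν₁⟩ (Walgate et al. decomposition underlying local distinguishability of two orthogonal states). -/

import Mathlib

open scoped InnerProductSpace

/-- Product (tensor) vector `u ⊗ v` in `ℂ² ⊗ ℂ^d`, modeled as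
`EuclideanSpace ℂ (Fin 2 × Fin d)`. -/
noncomputable def prodVec {d : ℕ} (u : EuclideanSpace ℂ (Fin 2))
    (v : EuclideanSpace ℂ (Fin d)) : EuclideanSpace ℂ (Fin 2 × Fin d) :=
  WithLp.toLp 2 (fun p : Fin 2 × Fin d => u p.1 * v p.2)


lemma walgate_key (M00 M01 M10 : ℂ) :
    ∃ u₀ u₁ : ℂ, u₀ * star u₀ + u₁ * star u₁ = 1 ∧
      u₀ * star u₀ * M00 + u₀ * star u₁ * M01 + u₁ * star u₀ * M10
        - u₁ * star u₁ * M00 = 0 := by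
  by_cases h : M00 = 0
  · exact ⟨1, 0, by simp, by simp [h]⟩
  · set a : ℂ := M01 / M00 with ha
    set b : ℂ := M10 / M00 with hb
    set w : ℂ := a - star b with hwdef
    set c : ℂ := if w = 0 then 1 else w / ((‖w‖ : ℝ) : ℂ) with hcdef
    have habs : ∀ _ : w ≠ 0, ((‖w‖ : ℝ) : ℂ) ≠ 0 := fun hw => by
      simpa [Complex.ofReal_ne_zero] using (norm_ne_zero_iff.mpr hw)
    have hc : c * star c = 1 := by
      by_cases hw : w = 0
      · simp [hcdef, hw]
      · rw [hcdef, if_neg hw, star_div₀, Complex.star_def, Complex.conj_ofReal,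
          div_mul_div_comm, Complex.mul_conj, ← Complex.ofReal_mul]
        rw [div_eq_one_iff_eq (by simpa using habs hw)]
        push_cast
        rw [← Complex.sq_norm]
        push_cast
        ring
    have hcw : (star c * w).im = 0 := by
      by_cases hw : w = 0
      · simp [hw]
      · have : star c * w = ((‖w‖ : ℝ) : ℂ) := by
          rw [hcdef, if_neg hw, star_div₀, Complex.star_def, Complex.conj_ofReal,
            div_mul_eq_mul_div, mul_comm, Complex.mul_conj, ← Complex.sq_norm]
          rw [div_eq_iff (habs hw)]
          push_cast
          ring
        rw [this, Complex.ofReal_im]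
    have him : (star c * a + c * b).im = 0 := by
      have hsplit : star c * a + c * b = star c * w + (star (c * b) + c * b) := by
        rw [hwdef]
        simp only [star_mul, star_star]
        ring
      rw [hsplit, Complex.add_im, hcw, zero_add, Complex.add_im,
        Complex.star_def, Complex.conj_im]
      ring
    set r : ℝ := (star c * a + c * b).re with hrdef
    have hre : star c * a + c * b = (r : ℂ) := by
      apply Complex.ext
      · rw [Complex.ofReal_re]
      · rw [Complex.ofReal_im]; exact him
    set R : ℝ := Real.sqrt (r ^ 2 + 4) with hRdef
    have hR2 : R ^ 2 = r ^ 2 + 4 := Real.sq_sqrt (by positivity)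
    have hRpos : 0 < R := Real.sqrt_pos.2 (by positivity)
    have hrle : |r| ≤ R := by
      rw [hRdef, ← Real.sqrt_sq_eq_abs]
      exact Real.sqrt_le_sqrt (by nlinarith)
    have hr1 : -R ≤ r := (abs_le.mp hrle).1
    have hr2 : r ≤ R := (abs_le.mp hrle).2
    have h1 : 0 ≤ (R - r) / (2 * R) := by
      apply div_nonneg <;> linarith
    have h2 : 0 ≤ (R + r) / (2 * R) := by
      apply div_nonneg <;> linarith
    set α : ℝ := Real.sqrt ((R - r) / (2 * R)) with hαdef
    set β : ℝ := Real.sqrt ((R + r) / (2 * R)) with hβdef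
    have hα2 : α ^ 2 = (R - r) / (2 * R) := Real.sq_sqrt h1
    have hβ2 : β ^ 2 = (R + r) / (2 * R) := Real.sq_sqrt h2
    have hαβ : α * β = 1 / R := by
      rw [hαdef, hβdef, ← Real.sqrt_mul h1]
      have heq : (R - r) / (2 * R) * ((R + r) / (2 * R)) = (1 / R) ^ 2 := by
        rw [div_mul_div_comm, div_pow]
        rw [div_eq_div_iff (by positivity) (by positivity)]
        nlinarith [hR2]
      rw [heq, Real.sqrt_sq (by positivity)]
    have hsum : α ^ 2 + β ^ 2 = 1 := by
      rw [hα2, hβ2]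
      field_simp
      ring
    have hsumC : (α : ℂ) ^ 2 + (β : ℂ) ^ 2 = 1 := by exact_mod_cast hsum
    have habR : α ^ 2 - β ^ 2 + α * β * r = 0 := by
      rw [hα2, hβ2, hαβ]
      field_simp
      ring
    have habC : (α : ℂ) ^ 2 - (β : ℂ) ^ 2 + (α : ℂ) * (β : ℂ) * (r : ℂ) = 0 := by
      exact_mod_cast habR
    have hM01 : M01 = a * M00 := (div_mul_cancel₀ M01 h).symm
    have hM10 : M10 = b * M00 := (div_mul_cancel₀ M10 h).symm
    have hsr : ∀ x : ℝ, star (x : ℂ) = (x : ℂ) := fun x => by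
      rw [Complex.star_def, Complex.conj_ofReal]
    refine ⟨(α : ℂ), (β : ℂ) * c, ?_, ?_⟩
    · simp only [star_mul, hsr]
      linear_combination hsumC + (β : ℂ) ^ 2 * hc
    · rw [hM01, hM10]
      simp only [star_mul, hsr]
      linear_combination M00 * habC + (α : ℂ) * (β : ℂ) * M00 * hre
        - (β : ℂ) ^ 2 * M00 * hc

/-- Walgate-type decomposition: any two orthogonal unit vectors `ψ, φ` in
`ℂ² ⊗ ℂ^d` can be written, in a suitable orthonormal basis `{|0'⟩,|1'⟩}` of
`ℂ²`, as `ψ = |0'⟩η₀ + |1'⟩η₁` and `φ = |0'⟩ν₀ + |1'⟩ν₁` with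
`⟨η₀|ν₀⟩ = ⟨η₁|ν₁⟩ = 0`. -/
theorem walgate_decomposition (d : ℕ) (ψ φ : EuclideanSpace ℂ (Fin 2 × Fin d))
    (hψ : ‖ψ‖ = 1) (hφ : ‖φ‖ = 1) (horth : ⟪ψ, φ⟫_ℂ = 0) :
    ∃ (f : Fin 2 → EuclideanSpace ℂ (Fin 2))
      (η ν : Fin 2 → EuclideanSpace ℂ (Fin d)),
      Orthonormal ℂ f ∧
      (∀ i, ⟪η i, ν i⟫_ℂ = 0) ∧
      ψ = prodVec (f 0) (η 0) + prodVec (f 1) (η 1) ∧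
      φ = prodVec (f 0) (ν 0) + prodVec (f 1) (ν 1) := by
  have htr : (∑ j, star (ψ (0, j)) * φ (0, j)) + (∑ j, star (ψ (1, j)) * φ (1, j)) = 0 := by
    rw [PiLp.inner_apply] at horth
    simp only [RCLike.inner_apply, starRingEnd_apply] at horth
    rw [Fintype.sum_prod_type, Fin.sum_univ_two] at horth
    simp only [mul_comm _ (star _)] at horth
    linear_combination horth
  obtain ⟨u₀, u₁, hn, hQ⟩ := walgate_key (∑ j, star (ψ (0, j)) * φ (0, j))
    (∑ j, star (ψ (0, j)) * φ (1, j)) (∑ j, star (ψ (1, j)) * φ (0, j))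
  set f : Fin 2 → EuclideanSpace ℂ (Fin 2) :=
    ![(!₂[u₀, u₁] : EuclideanSpace ℂ (Fin 2)),
      (!₂[-star u₁, star u₀] : EuclideanSpace ℂ (Fin 2))] with hf
  set η : Fin 2 → EuclideanSpace ℂ (Fin d) :=
    fun i => WithLp.toLp 2 (fun j => star (f i 0) * ψ (0, j) + star (f i 1) * ψ (1, j)) with hη
  set ν : Fin 2 → EuclideanSpace ℂ (Fin d) :=
    fun i => WithLp.toLp 2 (fun j => star (f i 0) * φ (0, j) + star (f i 1) * φ (1, j)) with hν
  have expand : ∀ (x y : EuclideanSpace ℂ (Fin 2 × Fin d)) (A B : ℂ),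
      (∑ j, star (star A * x (0, j) + star B * x (1, j))
        * (star A * y (0, j) + star B * y (1, j)))
      = A * star A * (∑ j, star (x (0, j)) * y (0, j))
      + A * star B * (∑ j, star (x (0, j)) * y (1, j))
      + B * star A * (∑ j, star (x (1, j)) * y (0, j))
      + B * star B * (∑ j, star (x (1, j)) * y (1, j)) := by
    intro x y A B
    rw [Finset.mul_sum, Finset.mul_sum, Finset.mul_sum, Finset.mul_sum,
      ← Finset.sum_add_distrib, ← Finset.sum_add_distrib, ← Finset.sum_add_distrib]
    apply Finset.sum_congr rfl
    intro j _
    simp only [star_mul, star_star, star_add, star_neg]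
    ring
  refine ⟨f, η, ν, ?_, ?_, ?_, ?_⟩
  · rw [orthonormal_iff_ite]
    simp only [Fin.forall_fin_two]
    refine ⟨⟨?_, ?_⟩, ?_, ?_⟩ <;>
      simp only [hf, WithLp.ofLp_toLp, Matrix.cons_val_zero, Matrix.cons_val_one, Matrix.head_cons,
        PiLp.inner_apply, RCLike.inner_apply, Fin.sum_univ_two, starRingEnd_apply,
        star_neg, star_star, reduceIte]
    · linear_combination hn
    · rw [if_neg (by decide)]; ring
    · rw [if_neg (by decide)]; ring
    · linear_combination hn
  · simp only [Fin.forall_fin_two]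
    constructor <;>
      · rw [PiLp.inner_apply]
        simp only [RCLike.inner_apply, starRingEnd_apply, hη, hν, hf, WithLp.ofLp_toLp,
          Matrix.cons_val_zero, Matrix.cons_val_one, Matrix.head_cons]
        simp only [mul_comm _ (star _)]
        first
        | (rw [expand ψ φ u₀ u₁]
           linear_combination hQ + (u₁ * star u₁) * htr)
        | (rw [expand ψ φ (-star u₁) (star u₀)]
           simp only [star_mul, star_star, star_add, star_neg]
           linear_combination -hQ + (u₀ * star u₀) * htr)
  · ext p
    obtain ⟨k, j⟩ := p
    revert k
    simp only [Fin.forall_fin_two, PiLp.add_apply, prodVec, hη, hf, WithLp.ofLp_toLp,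
      Matrix.cons_val_zero, Matrix.cons_val_one, Matrix.head_cons,
      star_neg, star_star]
    constructor
    · linear_combination (-(ψ (0, j))) * hn
    · linear_combination (-(ψ (1, j))) * hn
  · ext p
    obtain ⟨k, j⟩ := p
    revert k
    simp only [Fin.forall_fin_two, PiLp.add_apply, prodVec, hν, hf, WithLp.ofLp_toLp,
      Matrix.cons_val_zero, Matrix.cons_val_one, Matrix.head_cons,
      star_neg, star_star]
    constructor
    · linear_combination (-(φ (0, j))) * hn
    · linear_combination (-(φ (1, j))) * hn
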